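/- arXiv:1511.06404 — 2 statements merged into one kernel-verified Lean document; each statement's English description precedes it below -/
import Mathlib

section
/- Let S ⊂ ℤ_p be a set of exactly p points and let μ_S = ∑_{s∈S} δ_s be the sum of Dirac measures at the points of S. For ξ ∈ ℚ_p, the Fourier transform μ̂_S(ξ) = ∑_{s∈S} e^{−2πi{sξ}} vanishes if and only if |(s − s′)ξ|_p = p for all distinct s, s′ ∈ S. -/
open MeasureTheory Complex

noncomputable section

namespace PadicTiling

variable (p : ℕ) [hp : Fact p.Prime]

instance : MeasurableSpace ℚ_[p] := borel _
instance : BorelSpace ℚ_[p] := ⟨rfl⟩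

/-- The closed unit ball of `ℚ_[p]` (the set `ℤ_p`) as a positive compact set. -/
def unitBall : TopologicalSpace.PositiveCompacts ℚ_[p] where
  carrier := Metric.closedBall 0 1
  isCompact' := isCompact_closedBall 0 1
  interior_nonempty' := ⟨0, mem_interior_iff_mem_nhds.mpr (Metric.closedBall_mem_nhds 0 one_pos)⟩

/-- The Haar measure on `ℚ_[p]` normalized so that `ℤ_p` has measure `1`. -/
def mHaar : Measure ℚ_[p] := Measure.addHaarMeasure (unitBall p)

/-- `ℤ_p` as a subset of `ℚ_[p]`. -/
def Zp : Set ℚ_[p] := {x : ℚ_[p] | ‖x‖ ≤ 1}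

/-- The fractional part `{x}` of a `p`-adic number: the rational number
`∑_{n=v}^{-1} a_n p^n` given by the negative-power part of the digit expansion. -/
def padicFract (x : ℚ_[p]) : ℚ :=
  ((PadicInt.toZModPow ((-x.valuation).toNat)
      (⟨x * (p : ℚ_[p]) ^ ((-x.valuation).toNat), by
        rcases eq_or_ne x 0 with hx | hx
        · simp [hx]
        · have hp1 : (1 : ℝ) < p := Nat.one_lt_cast.mpr hp.out.one_lt
          rw [norm_mul, Padic.norm_eq_zpow_neg_valuation hx, Padic.norm_p_pow,
            ← zpow_add₀ (by positivity : (p : ℝ) ≠ 0)]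
          apply zpow_le_one_of_nonpos₀ (le_of_lt hp1) (by omega)
          ⟩ : ℤ_[p])).val : ℚ) / (p : ℚ) ^ ((-x.valuation).toNat)

/-- The standard additive character `χ(x) = e^{2πi {x}}` of `ℚ_[p]`. -/
def padicChar (x : ℚ_[p]) : ℂ :=
  Complex.exp (2 * Real.pi * Complex.I * (padicFract p x : ℂ))


lemma mul_pow_norm_le_one (x : ℚ_[p]) :
    ‖x * (p : ℚ_[p]) ^ ((-x.valuation).toNat)‖ ≤ 1 := by
  rcases eq_or_ne x 0 with hx | hx
  · simp [hx]
  · have hp1 : (1 : ℝ) < p := Nat.one_lt_cast.mpr hp.out.one_lt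
    rw [norm_mul, Padic.norm_eq_zpow_neg_valuation hx, Padic.norm_p_pow,
      ← zpow_add₀ (by positivity : (p : ℝ) ≠ 0)]
    apply zpow_le_one_of_nonpos₀ (le_of_lt hp1) (by omega)

lemma padicFract_spec (x : ℚ_[p]) :
    ∃ (k m : ℕ), m < p ^ k ∧ padicFract p x = (m : ℚ) / (p : ℚ) ^ k ∧
      ‖x - ((padicFract p x : ℚ) : ℚ_[p])‖ ≤ 1 := by
  haveI : NeZero (p ^ ((-x.valuation).toNat)) :=
    ⟨pow_ne_zero _ hp.out.pos.ne'⟩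
  set k := (-x.valuation).toNat with hk
  set y : ℤ_[p] := ⟨x * (p : ℚ_[p]) ^ k, mul_pow_norm_le_one p x⟩ with hy
  set m := (PadicInt.toZModPow k y).val with hm
  have hfr : padicFract p x = (m : ℚ) / (p : ℚ) ^ k := rfl
  refine ⟨k, m, ZMod.val_lt _, hfr, ?_⟩
  have hker : y - (m : ℤ_[p]) ∈ Ideal.span {(p : ℤ_[p]) ^ k} := by
    rw [← PadicInt.ker_toZModPow, RingHom.mem_ker, map_sub, map_natCast,
      ZMod.natCast_zmod_val, sub_self]
  have hnorm : ‖y - (m : ℤ_[p])‖ ≤ (p : ℝ) ^ (-(k : ℤ)) :=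
    (PadicInt.norm_le_pow_iff_mem_span_pow _ k).2 hker
  have hpk : ((p : ℚ_[p]) ^ k) ≠ 0 := by
    exact pow_ne_zero _ (Nat.cast_ne_zero.mpr hp.out.pos.ne')
  have h1 : (x - ((padicFract p x : ℚ) : ℚ_[p])) * (p : ℚ_[p]) ^ k
      = ((y - (m : ℤ_[p]) : ℤ_[p]) : ℚ_[p]) := by
    rw [hfr]
    push_cast
    field_simp
    rfl
  have h2 : ‖x - ((padicFract p x : ℚ) : ℚ_[p])‖ * ‖(p : ℚ_[p]) ^ k‖
      = ‖y - (m : ℤ_[p])‖ := by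
    rw [← norm_mul, h1, PadicInt.norm_def]
  have h3 : ‖(p : ℚ_[p]) ^ k‖ = (p : ℝ) ^ (-(k : ℤ)) := Padic.norm_p_pow k
  have hpos : (0 : ℝ) < (p : ℝ) ^ (-(k : ℤ)) := by
    have : (0:ℝ) < (p:ℝ) := by exact_mod_cast hp.out.pos
    positivity
  have := h2.le.trans hnorm
  rw [h3] at h2
  nlinarith [norm_nonneg (x - ((padicFract p x : ℚ) : ℚ_[p])), hnorm, h2]

lemma den_eq_one_of_norm_le (q : ℚ) (k : ℕ) (hden : q.den ∣ p ^ k)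
    (h : ‖(q : ℚ_[p])‖ ≤ 1) : q.den = 1 := by
  obtain ⟨j, hjk, hj⟩ := (Nat.dvd_prime_pow hp.out).1 hden
  rcases Nat.eq_zero_or_pos j with hj0 | hj0
  · simpa [hj0] using hj
  exfalso
  have hnum : ((q.num : ℚ_[p])) = (q : ℚ_[p]) * ((q.den : ℚ_[p])) := by
    have : (q.num : ℚ) = q * (q.den : ℚ) := by
      rw [mul_comm, ← Rat.den_mul_eq_num]
    exact_mod_cast congrArg (Rat.cast : ℚ → ℚ_[p]) this
  have hdennorm : ‖((q.den : ℚ_[p]))‖ < 1 := by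
    rw [hj]
    push_cast
    rw [norm_pow, Padic.norm_p]
    have hp1 : (1 : ℝ) < p := Nat.one_lt_cast.mpr hp.out.one_lt
    have : (p:ℝ)⁻¹ < 1 := by
      rw [inv_lt_one_iff₀]; right; exact hp1
    calc ((p:ℝ)⁻¹) ^ j < 1 ^ j := by
          apply pow_lt_pow_left₀ this (by positivity) (by omega)
      _ = 1 := one_pow j
  have : ‖(q.num : ℚ_[p])‖ < 1 := by
    rw [hnum, norm_mul]
    calc ‖(q : ℚ_[p])‖ * ‖((q.den : ℚ_[p]))‖ ≤ 1 * ‖((q.den : ℚ_[p]))‖ := by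
          apply mul_le_mul_of_nonneg_right h (norm_nonneg _)
      _ = ‖((q.den : ℚ_[p]))‖ := one_mul _
      _ < 1 := hdennorm
  have hpdvdnum : (p : ℤ) ∣ q.num := (Padic.norm_intCast_lt_one_iff).1 this
  have hpdvdden : p ∣ q.den := by
    rw [hj]; exact dvd_pow_self p (by omega)
  have hcop := q.reduced
  have : p ∣ Nat.gcd q.num.natAbs q.den :=
    Nat.dvd_gcd (Int.ofNat_dvd.mp ((Int.dvd_natAbs).mpr hpdvdnum)) hpdvdden
  rw [hcop] at this
  exact hp.out.one_lt.ne' (Nat.dvd_one.mp this)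

lemma padicFract_sub_int (x : ℚ_[p]) (q : ℚ) (k : ℕ) (hden : q.den ∣ p ^ k)
    (h : ‖x - (q : ℚ_[p])‖ ≤ 1) : ∃ n : ℤ, padicFract p x - q = n := by
  obtain ⟨k1, m, hmlt, hfr, hnorm⟩ := padicFract_spec p x
  have hfden : (padicFract p x).den ∣ p ^ k1 := by
    have h2 : padicFract p x = Rat.divInt (m : ℤ) ((p:ℤ) ^ k1) := by
      rw [hfr, Rat.divInt_eq_div]; push_cast; ring
    have h3 := Rat.den_dvd (m : ℤ) ((p:ℤ) ^ k1)
    rw [← h2] at h3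
    exact_mod_cast h3
  have hdden : (padicFract p x - q).den ∣ p ^ (k1 + k) := by
    rw [sub_eq_add_neg]
    refine (Rat.add_den_dvd _ _).trans ?_
    rw [Rat.neg_den, pow_add]
    exact Nat.mul_dvd_mul hfden hden
  have hdnorm : ‖((padicFract p x - q : ℚ) : ℚ_[p])‖ ≤ 1 := by
    have heq : ((padicFract p x - q : ℚ) : ℚ_[p])
        = (((padicFract p x : ℚ) : ℚ_[p]) - x) + (x - (q : ℚ_[p])) := by
      push_cast; ring
    rw [heq]
    refine le_trans (Padic.nonarchimedean _ _) (max_le ?_ h)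
    rwa [norm_sub_rev]
  have hone := den_eq_one_of_norm_le p _ (k1 + k) hdden hdnorm
  refine ⟨(padicFract p x - q).num, ?_⟩
  conv_lhs => rw [← Rat.num_div_den (padicFract p x - q)]
  rw [hone]
  norm_num

lemma padicFract_den_dvd (x : ℚ_[p]) : ∃ k : ℕ, (padicFract p x).den ∣ p ^ k := by
  obtain ⟨k1, m, hmlt, hfr, hnorm⟩ := padicFract_spec p x
  refine ⟨k1, ?_⟩
  have h2 : padicFract p x = Rat.divInt (m : ℤ) ((p:ℤ) ^ k1) := by
    rw [hfr, Rat.divInt_eq_div]; push_cast; ring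
  have h3 := Rat.den_dvd (m : ℤ) ((p:ℤ) ^ k1)
  rw [← h2] at h3
  exact_mod_cast h3

/-- `e(q) = exp(2 π i q)` for rational `q`. -/
def eC (q : ℚ) : ℂ := Complex.exp (2 * Real.pi * Complex.I * (q : ℂ))

lemma eC_add (a b : ℚ) : eC (a + b) = eC a * eC b := by
  rw [eC, eC, eC, ← Complex.exp_add]
  push_cast
  ring_nf

lemma eC_int (n : ℤ) : eC (n : ℚ) = 1 := by
  rw [eC, Complex.exp_eq_one_iff]
  exact ⟨n, by push_cast; ring⟩

lemma eC_congr {a b : ℚ} (h : ∃ n : ℤ, a - b = n) : eC a = eC b := by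
  obtain ⟨n, hn⟩ := h
  have : a = b + (n : ℚ) := by linarith [hn]
  rw [this, eC_add, eC_int, mul_one]

lemma eC_ne_zero (q : ℚ) : eC q ≠ 0 := Complex.exp_ne_zero _

lemma eC_eq_one_iff {q : ℚ} : eC q = 1 ↔ ∃ n : ℤ, q = (n : ℚ) := by
  constructor
  · intro h
    rw [eC, Complex.exp_eq_one_iff] at h
    obtain ⟨n, hn⟩ := h
    refine ⟨n, ?_⟩
    have h2 : (2 * Real.pi * Complex.I : ℂ) ≠ 0 :=
      mul_ne_zero (mul_ne_zero two_ne_zero (Complex.ofReal_ne_zero.mpr Real.pi_ne_zero))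
        Complex.I_ne_zero
    have : (q : ℂ) = (n : ℂ) := by
      apply mul_left_cancel₀ h2
      rw [hn]; ring
    exact_mod_cast this
  · rintro ⟨n, rfl⟩; exact eC_int n

/-- The character `χ(x) = e^{2πi {x}}`. -/
def chi (x : ℚ_[p]) : ℂ := eC (padicFract p x)

lemma chi_ne_zero (x : ℚ_[p]) : chi p x ≠ 0 := eC_ne_zero _

lemma chi_add (x y : ℚ_[p]) : chi p (x + y) = chi p x * chi p y := by
  obtain ⟨kx, mx, _, _, hx⟩ := padicFract_spec p x
  obtain ⟨ky, my, _, _, hy⟩ := padicFract_spec p y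
  obtain ⟨k1, h1⟩ := padicFract_den_dvd p x
  obtain ⟨k2, h2⟩ := padicFract_den_dvd p y
  have hden : (padicFract p x + padicFract p y).den ∣ p ^ (k1 + k2) := by
    refine (Rat.add_den_dvd _ _).trans ?_
    rw [pow_add]; exact Nat.mul_dvd_mul h1 h2
  have hnorm : ‖(x + y) - ((padicFract p x + padicFract p y : ℚ) : ℚ_[p])‖ ≤ 1 := by
    have heq : (x + y) - ((padicFract p x + padicFract p y : ℚ) : ℚ_[p])
        = (x - ((padicFract p x : ℚ) : ℚ_[p])) + (y - ((padicFract p y : ℚ) : ℚ_[p])) := by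
      push_cast; ring
    rw [heq]
    exact le_trans (Padic.nonarchimedean _ _) (max_le hx hy)
  have key := padicFract_sub_int p (x + y) _ _ hden hnorm
  calc chi p (x + y) = eC (padicFract p x + padicFract p y) := eC_congr key
    _ = chi p x * chi p y := eC_add _ _

lemma chi_zero : chi p 0 = 1 := by
  have h := chi_add p 0 0
  rw [add_zero] at h
  have h2 : chi p 0 * 1 = chi p 0 * chi p 0 := by rw [mul_one]; exact h
  exact (mul_left_cancel₀ (chi_ne_zero p 0) h2).symm

lemma chi_eq_one_iff (x : ℚ_[p]) : chi p x = 1 ↔ ‖x‖ ≤ 1 := by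
  obtain ⟨k, m, hmlt, hfr, hnorm⟩ := padicFract_spec p x
  constructor
  · intro h
    obtain ⟨n, hn⟩ := eC_eq_one_iff.mp h
    have h0 : (0:ℚ) ≤ padicFract p x := by
      rw [hfr]
      exact div_nonneg (Nat.cast_nonneg m) (pow_nonneg (Nat.cast_nonneg p) k)
    have h1 : padicFract p x < 1 := by
      rw [hfr, div_lt_one (by exact_mod_cast pow_pos hp.out.pos k)]
      exact_mod_cast hmlt
    rw [hn] at h0 h1
    have hn0 : n = 0 := by
      have g0 : (0:ℤ) ≤ n := by exact_mod_cast h0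
      have g1 : n < 1 := by exact_mod_cast h1
      omega
    rw [hn0] at hn
    rw [hn] at hnorm
    simpa using hnorm
  · intro h
    have key := padicFract_sub_int p x 0 0 (by simp) (by simpa using h)
    simp only [sub_zero] at key
    exact eC_eq_one_iff.mpr key

lemma chi_nat_mul (n : ℕ) (x : ℚ_[p]) : chi p ((n : ℚ_[p]) * x) = chi p x ^ n := by
  induction n with
  | zero => simpa using chi_zero p
  | succ n ih =>
    have : ((n + 1 : ℕ) : ℚ_[p]) * x = (n : ℚ_[p]) * x + x := by push_cast; ring
    rw [this, chi_add, ih, pow_succ]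

lemma norm_p_mul (x : ℚ_[p]) : ‖(p : ℚ_[p]) * x‖ = (p : ℝ)⁻¹ * ‖x‖ := by
  rw [norm_mul, Padic.norm_p]

lemma norm_eq_p_iff (x : ℚ_[p]) : ‖x‖ = p ↔ chi p x ^ p = 1 ∧ chi p x ≠ 1 := by
  have hp1 : (1 : ℝ) < p := Nat.one_lt_cast.mpr hp.out.one_lt
  have hp0 : (0 : ℝ) < p := by linarith
  rw [← chi_nat_mul p p x, chi_eq_one_iff, Ne, chi_eq_one_iff, norm_p_mul]
  constructor
  · intro h
    rw [h]
    constructor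
    · rw [inv_mul_cancel₀ hp0.ne']
    · intro hle; linarith
  · rintro ⟨h1, h2⟩
    have hgt : 1 < ‖x‖ := lt_of_not_ge h2
    have hle : ‖x‖ ≤ p := by
      have := (inv_mul_le_iff₀ hp0).mp h1
      simpa using this
    have hx0 : x ≠ 0 := by
      intro h; rw [h, norm_zero] at hgt; linarith
    rw [Padic.norm_eq_zpow_neg_valuation hx0] at hgt hle ⊢
    have hv1 : (0 : ℤ) < -x.valuation := by
      have := (zpow_lt_zpow_iff_right₀ hp1 (m := 0) (n := -x.valuation)).mp (by simpa using hgt)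
      exact this
    have hv2 : -x.valuation ≤ 1 := by
      have := (zpow_le_zpow_iff_right₀ hp1 (m := -x.valuation) (n := 1)).mp (by simpa using hle)
      exact this
    have : -x.valuation = 1 := le_antisymm hv2 hv1
    rw [this, zpow_one]

open Finset Polynomial in
lemma core_vanishing {P N : ℕ} (hP : P.Prime) (hN : 1 ≤ N) {ι : Type*}
    (S : Finset ι) (hS : S.card = P) (f : ι → ℂ)
    (hf : ∀ s ∈ S, f s ^ (P ^ N) = 1) (hsum : ∑ s ∈ S, f s = 0) :
    ∀ s ∈ S, ∀ t ∈ S, s ≠ t → (f s / f t) ^ P = 1 ∧ f s ≠ f t := by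
  classical
  set n := P ^ N with hn
  have hn0 : n ≠ 0 := pow_ne_zero _ hP.pos.ne'
  have hnpos : 0 < n := Nat.pos_of_ne_zero hn0
  haveI : NeZero n := ⟨hn0⟩
  set ζ : ℂ := Complex.exp (2 * Real.pi * Complex.I / n) with hzeta
  have hζ : IsPrimitiveRoot ζ n := Complex.isPrimitiveRoot_exp n hn0
  have hchoice : ∀ s : ι, ∃ i : ℕ, i < n ∧ (s ∈ S → ζ ^ i = f s) := by
    intro s
    by_cases hs : s ∈ S
    · obtain ⟨i, hi, he⟩ := hζ.eq_pow_of_pow_eq_one (hf s hs)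
      exact ⟨i, hi, fun _ => he⟩
    · exact ⟨0, hnpos, fun h => absurd h hs⟩
  choose a ha1 ha2 using hchoice
  set d := P ^ (N - 1) with hd
  have hdP : d * P = n := by
    rw [hd, hn, ← pow_succ]
    congr 1
    omega
  have hd0 : 0 < d := pow_pos hP.pos _
  have hP1 : 1 < P := hP.one_lt
  set ω : ℂ := ζ ^ d with homega
  have hω : IsPrimitiveRoot ω P := hζ.pow hnpos hdP.symm
  have hω1 : ω ≠ 1 := hω.ne_one hP1
  have hωP : ω ^ P = 1 := hω.pow_eq_one
  have hgeom : ∑ c ∈ range P, ω ^ c = 0 := by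
    rw [geom_sum_eq hω1, hωP]
    simp
  have hrel : ∀ r : ℕ, ∑ c ∈ range P, ζ ^ (r + d * c) = 0 := by
    intro r
    have h1 : ∀ c, ζ ^ (r + d * c) = ζ ^ r * ω ^ c := by
      intro c
      rw [pow_add, pow_mul]
    simp_rw [h1, ← Finset.mul_sum, hgeom, mul_zero]
  set κ : ι → ℕ × ℕ := fun s => (a s % d, a s / d) with hkappa
  have hmaps : ∀ s ∈ S, κ s ∈ range d ×ˢ range P := by
    intro s _
    rw [Finset.mem_product, Finset.mem_range, Finset.mem_range]
    refine ⟨Nat.mod_lt _ hd0, ?_⟩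
    rw [Nat.div_lt_iff_lt_mul hd0, mul_comm]
    rw [hdP]
    exact ha1 s
  set cnt : ℕ × ℕ → ℕ := fun y => (S.filter (fun s => κ s = y)).card with hcnt
  have hdecomp : ∀ s, a s = (κ s).1 + d * (κ s).2 := fun s => (Nat.mod_add_div _ _).symm
  have hsum' : ∑ s ∈ S, ζ ^ (a s) = 0 := by
    rw [← hsum]
    exact Finset.sum_congr rfl fun s hs => ha2 s hs
  have total : ∑ y ∈ range d ×ˢ range P, (cnt y : ℂ) * ζ ^ (y.1 + d * y.2) = 0 := by
    rw [← hsum', ← Finset.sum_fiberwise_of_maps_to hmaps (fun s => ζ ^ (a s))]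
    refine Finset.sum_congr rfl fun y _ => ?_
    have : ∀ s ∈ S.filter (fun s => κ s = y), ζ ^ (a s) = ζ ^ (y.1 + d * y.2) := by
      intro s hs
      obtain ⟨_, hks⟩ := Finset.mem_filter.mp hs
      rw [hdecomp s, hks]
    rw [Finset.sum_congr rfl this, Finset.sum_const, nsmul_eq_mul]
  set Q : Polynomial ℚ :=
      ∑ y ∈ range d ×ˢ range (P - 1),
        Polynomial.C ((cnt (y.1, y.2) : ℚ) - (cnt (y.1, P - 1) : ℚ)) * Polynomial.X ^ (y.1 + d * y.2)
    with hQ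
  have hQeval : Polynomial.aeval ζ Q = 0 := by
    rw [hQ, map_sum]
    have hterm : ∀ y : ℕ × ℕ,
        Polynomial.aeval ζ (Polynomial.C ((cnt (y.1, y.2) : ℚ) - (cnt (y.1, P - 1) : ℚ))
          * Polynomial.X ^ (y.1 + d * y.2))
        = ((cnt (y.1, y.2) : ℂ) - (cnt (y.1, P - 1) : ℂ)) * ζ ^ (y.1 + d * y.2) := by
      intro y
      rw [map_mul, map_pow, Polynomial.aeval_X, Polynomial.aeval_C]
      norm_num
    rw [Finset.sum_congr rfl fun y _ => hterm y]
    rw [Finset.sum_product]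
    have hper : ∀ r ∈ range d,
        ∑ c ∈ range (P - 1),
            ((cnt (r, c) : ℂ) - (cnt (r, P - 1) : ℂ)) * ζ ^ (r + d * c)
        = ∑ c ∈ range P, (cnt (r, c) : ℂ) * ζ ^ (r + d * c) := by
      intro r _
      have hsplit : ∑ c ∈ range (P - 1), ζ ^ (r + d * c) = -ζ ^ (r + d * (P - 1)) := by
        have h0 := hrel r
        rw [show P = (P - 1) + 1 by omega, Finset.sum_range_succ] at h0
        linear_combination h0
      rw [show P = (P - 1) + 1 by omega, Finset.sum_range_succ,
        show (P - 1) + 1 - 1 = P - 1 by omega]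
      have expand : ∑ c ∈ range (P - 1),
          ((cnt (r, c) : ℂ) - (cnt (r, P - 1) : ℂ)) * ζ ^ (r + d * c)
          = (∑ c ∈ range (P - 1), (cnt (r, c) : ℂ) * ζ ^ (r + d * c))
            - (cnt (r, P - 1) : ℂ) * ∑ c ∈ range (P - 1), ζ ^ (r + d * c) := by
        rw [Finset.mul_sum, ← Finset.sum_sub_distrib]
        exact Finset.sum_congr rfl fun c _ => by ring
      rw [expand, hsplit]
      ring
    rw [Finset.sum_congr rfl hper]
    rw [Finset.sum_product] at total
    exact total
  have hQdvd : minpoly ℚ ζ ∣ Q := minpoly.dvd ℚ ζ hQeval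
  have hmindeg : (minpoly ℚ ζ).degree = ((d * (P - 1) : ℕ) : WithBot ℕ) := by
    rw [← Polynomial.cyclotomic_eq_minpoly_rat hζ hnpos, Polynomial.degree_cyclotomic]
    congr 1
    rw [hn, Nat.totient_prime_pow hP (by omega : 0 < N), hd]
  have hQdeg : Q.degree < ((d * (P - 1) : ℕ) : WithBot ℕ) := by
    rw [hQ]
    apply lt_of_le_of_lt (Polynomial.degree_sum_le _ _)
    rw [Finset.sup_lt_iff (by exact_mod_cast WithBot.bot_lt_coe _)]
    intro y hy
    apply lt_of_le_of_lt (Polynomial.degree_C_mul_X_pow_le _ _)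
    rw [Nat.cast_lt]
    obtain ⟨hy1, hy2⟩ := Finset.mem_product.mp hy
    rw [Finset.mem_range] at hy1 hy2
    have h1 : y.2 + 1 ≤ P - 1 := by omega
    calc y.1 + d * y.2 < d + d * y.2 := by omega
      _ = d * (y.2 + 1) := by ring
      _ ≤ d * (P - 1) := Nat.mul_le_mul_left d h1
  have hQ0 : Q = 0 := by
    apply Polynomial.eq_zero_of_dvd_of_degree_lt hQdvd
    rw [hmindeg]
    exact hQdeg
  have hcoeff : ∀ r < d, ∀ c < P - 1, cnt (r, c) = cnt (r, P - 1) := by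
    intro r hr c hc
    have h1 : Q.coeff (r + d * c) = (cnt (r, c) : ℚ) - (cnt (r, P - 1) : ℚ) := by
      rw [hQ, Polynomial.finset_sum_coeff]
      rw [Finset.sum_eq_single ((r, c) : ℕ × ℕ)]
      · rw [Polynomial.coeff_C_mul, Polynomial.coeff_X_pow, if_pos rfl, mul_one]
      · intro y hy hne
        rw [Polynomial.coeff_C_mul, Polynomial.coeff_X_pow, if_neg, mul_zero]
        intro heq
        obtain ⟨hy1, hy2⟩ := Finset.mem_product.mp hy
        rw [Finset.mem_range] at hy1 hy2
        have e1 : y.1 = r := by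
          have h5 := congrArg (· % d) heq
          have h6 : r = y.1 := by
            simpa [Nat.add_mul_mod_self_left, Nat.mod_eq_of_lt hy1,
              Nat.mod_eq_of_lt hr] using h5
          exact h6.symm
        have e2 : y.2 = c := by
          rw [e1] at heq
          have : d * y.2 = d * c := by omega
          exact Nat.eq_of_mul_eq_mul_left hd0 this
        exact hne (Prod.ext e1 e2)
      · intro hmem
        exact absurd (Finset.mem_product.mpr ⟨Finset.mem_range.mpr hr, Finset.mem_range.mpr hc⟩)
          hmem
    rw [hQ0, Polynomial.coeff_zero] at h1
    have : (cnt (r, c) : ℚ) = (cnt (r, P - 1) : ℚ) := by linarith [h1.symm]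
    exact_mod_cast this
  have hcoeff' : ∀ r < d, ∀ c < P, cnt (r, c) = cnt (r, P - 1) := by
    intro r hr c hc
    rcases Nat.lt_or_ge c (P - 1) with h | h
    · exact hcoeff r hr c h
    · have : c = P - 1 := by omega
      rw [this]
  have hcard : ∑ y ∈ range d ×ˢ range P, cnt y = P :=
    ((Finset.card_eq_sum_card_fiberwise hmaps).symm).trans hS
  have hsum1 : ∑ r ∈ range d, cnt (r, P - 1) = 1 := by
    have h2 : ∑ y ∈ range d ×ˢ range P, cnt y = ∑ r ∈ range d, P * cnt (r, P - 1) := by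
      rw [Finset.sum_product]
      refine Finset.sum_congr rfl fun r hr => ?_
      rw [Finset.mem_range] at hr
      have : ∀ c ∈ range P, cnt (r, c) = cnt (r, P - 1) := fun c hc =>
        hcoeff' r hr c (Finset.mem_range.mp hc)
      rw [Finset.sum_congr rfl this, Finset.sum_const, Finset.card_range, smul_eq_mul]
    rw [h2] at hcard
    rw [← Finset.mul_sum] at hcard
    nlinarith [hcard, hP.pos]
  obtain ⟨r0, hr0mem, hr0ne⟩ := Finset.exists_ne_zero_of_sum_ne_zero
    (by rw [hsum1]; omega : ∑ r ∈ range d, cnt (r, P - 1) ≠ 0)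
  have hr0d : r0 < d := Finset.mem_range.mp hr0mem
  have hsplit0 := Finset.add_sum_erase _ (fun r => cnt (r, P - 1)) hr0mem
  rw [hsum1] at hsplit0
  have hsplit : cnt (r0, P - 1) + ∑ x ∈ (range d).erase r0, cnt (x, P - 1) = 1 := by
    simpa using hsplit0
  have hr0one : cnt (r0, P - 1) = 1 := by omega
  have hrest : ∀ r ∈ range d, r ≠ r0 → cnt (r, P - 1) = 0 := by
    intro r hr hne
    have hzero : ∑ r ∈ (range d).erase r0, cnt (r, P - 1) = 0 := by omega
    exact (Finset.sum_eq_zero_iff).mp hzero r (Finset.mem_erase.mpr ⟨hne, hr⟩)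
  have hcnt_all : ∀ y : ℕ × ℕ, y.1 < d → y.2 < P → cnt y = if y.1 = r0 then 1 else 0 := by
    rintro ⟨r, c⟩ hr hc
    simp only at hr hc ⊢
    rw [hcoeff' r hr c hc]
    by_cases h : r = r0
    · rw [if_pos h, h, hr0one]
    · rw [if_neg h]
      exact hrest r (Finset.mem_range.mpr hr) h
  -- every point sits over r0
  have hmem_cnt : ∀ s ∈ S, 0 < cnt (κ s) := by
    intro s hs
    rw [hcnt, Finset.card_pos]
    exact ⟨s, Finset.mem_filter.mpr ⟨hs, rfl⟩⟩
  have hr0eq : ∀ s ∈ S, (κ s).1 = r0 := by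
    intro s hs
    have hm := hmaps s hs
    rw [Finset.mem_product, Finset.mem_range, Finset.mem_range] at hm
    have h3 := hcnt_all (κ s) hm.1 hm.2
    by_contra hne
    rw [if_neg hne] at h3
    have h4 := hmem_cnt s hs
    omega
  have hcne : ∀ s ∈ S, ∀ t ∈ S, s ≠ t → (κ s).2 ≠ (κ t).2 := by
    intro s hs t ht hst heq
    have hks : κ s = κ t := by
      apply Prod.ext
      · rw [hr0eq s hs, hr0eq t ht]
      · exact heq
    have h2 : 1 < cnt (κ t) := by
      rw [hcnt, Finset.one_lt_card]
      exact ⟨s, Finset.mem_filter.mpr ⟨hs, hks⟩, t, Finset.mem_filter.mpr ⟨ht, rfl⟩, hst⟩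
    have hm := hmaps t ht
    rw [Finset.mem_product, Finset.mem_range, Finset.mem_range] at hm
    have h3 := hcnt_all (κ t) hm.1 hm.2
    split_ifs at h3 <;> omega
  -- final conclusion
  intro s hs t ht hst
  have hfs : f s = ζ ^ (a s) := (ha2 s hs).symm
  have hft : f t = ζ ^ (a t) := (ha2 t ht).symm
  have hζ0 : ζ ≠ 0 := hζ.ne_zero hn0
  have hexp : ∀ u ∈ S, ζ ^ (a u * P) = ζ ^ (r0 * P) := by
    intro u hu
    have h1 : a u * P = r0 * P + n * (κ u).2 := by
      rw [hdecomp u, hr0eq u hu, ← hdP]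
      ring
    rw [h1, pow_add, pow_mul ζ n, hζ.pow_eq_one, one_pow, mul_one]
  constructor
  · rw [hfs, hft, div_pow, ← pow_mul, ← pow_mul, hexp s hs, hexp t ht, div_self]
    exact pow_ne_zero _ hζ0
  · intro heq
    rw [hfs, hft] at heq
    have hainj : a s = a t := hζ.pow_inj (ha1 s) (ha1 t) heq
    have : (κ s).2 = (κ t).2 := by
      have h1 := hdecomp s
      have h2 := hdecomp t
      rw [hr0eq s hs] at h1
      rw [hr0eq t ht] at h2
      have : d * (κ s).2 = d * (κ t).2 := by omega
      exact Nat.eq_of_mul_eq_mul_left hd0 this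
    exact hcne s hs t ht hst this

lemma chi_term (x : ℚ_[p]) :
    Complex.exp (-(2 * Real.pi * Complex.I * (padicFract p x : ℂ))) = chi p (-x) := by
  obtain ⟨k, hk⟩ := padicFract_den_dvd p x
  obtain ⟨k1, m1, _, _, hnorm⟩ := padicFract_spec p x
  have hcongr : chi p (-x) = eC (-(padicFract p x)) := by
    apply eC_congr
    apply padicFract_sub_int p (-x) (-(padicFract p x)) k
    · rw [Rat.neg_den]; exact hk
    · have : -x - ((-(padicFract p x) : ℚ) : ℚ_[p]) = -(x - ((padicFract p x : ℚ) : ℚ_[p])) := by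
        push_cast; ring
      rw [this, norm_neg]
      exact hnorm
  rw [hcongr, eC]
  congr 1
  push_cast
  ring

lemma exists_pow_ge (ξ : ℚ_[p]) : ∃ N : ℕ, 1 ≤ N ∧ ‖ξ‖ ≤ (p : ℝ) ^ (N : ℤ) := by
  have hp1 : (1 : ℝ) < p := Nat.one_lt_cast.mpr hp.out.one_lt
  rcases eq_or_ne ξ 0 with h | h
  · exact ⟨1, le_refl 1, by rw [h, norm_zero]; positivity⟩
  · refine ⟨max 1 (-ξ.valuation).toNat, le_max_left _ _, ?_⟩
    rw [Padic.norm_eq_zpow_neg_valuation h]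
    apply zpow_le_zpow_right₀ hp1.le
    have h1 : -ξ.valuation ≤ ((-ξ.valuation).toNat : ℤ) := Int.self_le_toNat _
    have h2 : ((-ξ.valuation).toNat : ℤ) ≤ ((max 1 (-ξ.valuation).toNat : ℕ) : ℤ) := by
      exact_mod_cast le_max_right 1 _
    omega

lemma chi_sub_norm {x y : ℚ_[p]} (h : chi p x = chi p y) : ‖x - y‖ ≤ 1 := by
  have hadd : chi p x = chi p (x - y) * chi p y := by
    rw [← chi_add]; congr 1; ring
  rw [h] at hadd
  have : chi p (x - y) = 1 := by
    field_simp [chi_ne_zero p y] at hadd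
    exact hadd.symm
  exact (chi_eq_one_iff p _).mp this


/-- For a set `S ⊆ ℤ_p` of exactly `p` points, the exponential sum
`μ̂_S(ξ) = ∑_{s ∈ S} e^{-2πi {s ξ}}` vanishes iff `|(s - s')ξ|_p = p` for all distinct
`s, s' ∈ S`. -/
theorem dirac_sum_fourier_vanishes_iff (S : Finset ℤ_[p]) (hS : S.card = p) (ξ : ℚ_[p]) :
    (∑ s ∈ S, Complex.exp (-(2 * Real.pi * Complex.I
        * (padicFract p ((s : ℚ_[p]) * ξ) : ℂ)))) = 0
      ↔ ∀ s ∈ S, ∀ s' ∈ S, s ≠ s' → ‖((s : ℚ_[p]) - (s' : ℚ_[p])) * ξ‖ = p := by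
  classical
  have hp1 : (1 : ℝ) < p := Nat.one_lt_cast.mpr hp.out.one_lt
  rw [show (∑ s ∈ S, Complex.exp (-(2 * Real.pi * Complex.I
        * (padicFract p ((s : ℚ_[p]) * ξ) : ℂ))))
      = ∑ s ∈ S, chi p (-((s : ℚ_[p]) * ξ)) from
    Finset.sum_congr rfl fun s _ => chi_term p _]
  constructor
  · intro hsum s hs t ht hst
    obtain ⟨N, hN1, hNξ⟩ := exists_pow_ge p ξ
    have hf : ∀ u ∈ S, (chi p (-((u : ℚ_[p]) * ξ))) ^ (p ^ N) = 1 := by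
      intro u _
      rw [← chi_nat_mul]
      apply (chi_eq_one_iff p _).mpr
      push_cast
      rw [norm_mul, norm_neg, norm_mul, Padic.norm_p_pow]
      have h1 : ‖(u : ℚ_[p])‖ ≤ 1 := u.2
      have h2 : (0:ℝ) < (p : ℝ) ^ (-(N:ℤ)) := by positivity
      have h3 : ‖(u : ℚ_[p])‖ * ‖ξ‖ ≤ (p : ℝ) ^ (N : ℤ) := by
        have h4 : ‖(u : ℚ_[p])‖ * ‖ξ‖ ≤ 1 * ‖ξ‖ :=
          mul_le_mul_of_nonneg_right h1 (norm_nonneg _)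
        rw [one_mul] at h4
        exact h4.trans hNξ
      calc (p:ℝ) ^ (-(N:ℤ)) * (‖(u : ℚ_[p])‖ * ‖ξ‖)
          ≤ (p:ℝ) ^ (-(N:ℤ)) * (p:ℝ) ^ (N:ℤ) := mul_le_mul_of_nonneg_left h3 h2.le
        _ = 1 := by
            rw [← zpow_add₀ (by positivity : (p:ℝ) ≠ 0)]
            simp
    have hcore := core_vanishing hp.out hN1 S hS _ hf hsum s hs t ht hst
    obtain ⟨hpow, hneq⟩ := hcore
    have hdiv : chi p (-((s : ℚ_[p]) * ξ)) / chi p (-((t : ℚ_[p]) * ξ))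
        = chi p (((t : ℚ_[p]) - (s : ℚ_[p])) * ξ) := by
      rw [div_eq_iff (chi_ne_zero p _), ← chi_add]
      congr 1
      ring
    rw [hdiv] at hpow
    have hne1 : chi p (((t : ℚ_[p]) - (s : ℚ_[p])) * ξ) ≠ 1 := by
      intro h1
      apply hneq
      have : chi p (-((s : ℚ_[p]) * ξ)) / chi p (-((t : ℚ_[p]) * ξ)) = 1 := by
        rw [hdiv, h1]
      field_simp [chi_ne_zero] at this
      rwa [mul_comm ξ] at this
    have hnorm := (norm_eq_p_iff p _).mpr ⟨hpow, hne1⟩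
    rw [show ((s : ℚ_[p]) - (t : ℚ_[p])) * ξ = -(((t : ℚ_[p]) - (s : ℚ_[p])) * ξ) by ring,
      norm_neg]
    exact hnorm
  · intro hdiff
    have hSne : S.Nonempty := by
      rw [← Finset.card_pos, hS]; exact hp.out.pos
    obtain ⟨s0, hs0⟩ := hSne
    have hfactor : ∀ s ∈ S, chi p (-((s : ℚ_[p]) * ξ))
        = chi p (-((s0 : ℚ_[p]) * ξ)) * chi p (((s0 : ℚ_[p]) - (s : ℚ_[p])) * ξ) := by
      intro s _
      rw [← chi_add]
      congr 1
      ring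
    rw [Finset.sum_congr rfl hfactor, ← Finset.mul_sum]
    apply mul_eq_zero_of_right
    set g : ℤ_[p] → ℂ := fun s => chi p (((s0 : ℚ_[p]) - (s : ℚ_[p])) * ξ) with hg
    have hginj : ∀ x ∈ S, ∀ y ∈ S, g x = g y → x = y := by
      intro x hx y hy hxy
      by_contra hne
      have h1 : ‖(((s0 : ℚ_[p]) - (x : ℚ_[p])) * ξ) - (((s0 : ℚ_[p]) - (y : ℚ_[p])) * ξ)‖ ≤ 1 :=
        chi_sub_norm p hxy
      have h2 : (((s0 : ℚ_[p]) - (x : ℚ_[p])) * ξ) - (((s0 : ℚ_[p]) - (y : ℚ_[p])) * ξ)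
          = ((y : ℚ_[p]) - (x : ℚ_[p])) * ξ := by ring
      rw [h2] at h1
      have h3 := hdiff y hy x hx (fun h => hne h.symm)
      rw [h3] at h1
      linarith
    have hgroot : ∀ s ∈ S, g s ^ p = 1 := by
      intro s hs
      rcases eq_or_ne s s0 with h | h
      · rw [hg]
        simp only [h]
        rw [sub_self, zero_mul, chi_zero, one_pow]
      · exact ((norm_eq_p_iff p _).mp (hdiff s0 hs0 s hs (fun hh => h hh.symm))).1
    have hη : IsPrimitiveRoot (Complex.exp (2 * Real.pi * Complex.I / p)) p :=
      Complex.isPrimitiveRoot_exp p hp.out.pos.ne'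
    have himg : S.image g = Polynomial.nthRootsFinset p (1 : ℂ) := by
      apply Finset.eq_of_subset_of_card_le
      · intro z hz
        obtain ⟨s, hs, rfl⟩ := Finset.mem_image.mp hz
        exact (Polynomial.mem_nthRootsFinset hp.out.pos (1 : ℂ)).mpr (hgroot s hs)
      · rw [Finset.card_image_of_injOn fun x hx y hy h => hginj x hx y hy h, hS,
          hη.card_nthRootsFinset]
    have hsum0 : ∑ z ∈ Polynomial.nthRootsFinset p (1 : ℂ), z = 0 := by
      set η := Complex.exp (2 * Real.pi * Complex.I / p) with hηdef
      have hpowinj : ∀ x ∈ Finset.range p, ∀ y ∈ Finset.range p,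
          η ^ x = η ^ y → x = y := fun x hx y hy h =>
        hη.pow_inj (Finset.mem_range.mp hx) (Finset.mem_range.mp hy) h
      have himg2 : (Finset.range p).image (fun j => η ^ j) = Polynomial.nthRootsFinset p (1 : ℂ) := by
        apply Finset.eq_of_subset_of_card_le
        · intro z hz
          obtain ⟨j, _, rfl⟩ := Finset.mem_image.mp hz
          apply (Polynomial.mem_nthRootsFinset hp.out.pos (1 : ℂ)).mpr
          rw [← pow_mul, mul_comm, pow_mul, hη.pow_eq_one, one_pow]
        · rw [Finset.card_image_of_injOn fun x hx y hy h => hpowinj x hx y hy h,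
            Finset.card_range, hη.card_nthRootsFinset]
      rw [← himg2, Finset.sum_image hpowinj]
      rw [geom_sum_eq (hη.ne_one hp.out.one_lt), hη.pow_eq_one]
      simp
    have hsi : ∑ z ∈ S.image g, z = ∑ x ∈ S, g x := Finset.sum_image hginj
    rw [← hsi, himg]
    exact hsum0

end PadicTiling
end
end

section
/- Let T ⊂ ℤ_p be a finite set with at least two elements and let γ_T := max over distinct t, t′ ∈ T of −log_p(|t − t′|_p). Then for every ξ ∈ ℚ_p with |ξ|_p > p^{γ_T + 1}, the exponential sum μ̂_T(ξ) = ∑_{t∈T} e^{−2πi{tξ}} is nonzero. -/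
open MeasureTheory Complex

noncomputable section

namespace PadicTiling

variable (p : ℕ) [hp : Fact p.Prime]

/-- `γ_T := max_{t ≠ t' ∈ T} (-log_p |t - t'|_p)`, the largest valuation of a difference of
two distinct elements of `T`. -/
def gammaT (T : Finset ℤ_[p]) (hT : 1 < T.card) : ℤ :=
  letI := Classical.decEq ℤ_[p]
  T.offDiag.sup'
    (Finset.card_pos.mp (by
      rw [Finset.offDiag_card]
      have h2 : 2 * T.card ≤ T.card * T.card := Nat.mul_le_mul_right _ hT
      omega))
    fun tt => (tt.1 - tt.2).valuation

/-! ### Auxiliary lemmas for the proof -/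

lemma toZModPow_val_dvd (z : ℤ_[p]) (n : ℕ) :
    ((p : ℤ_[p]) ^ n) ∣ z - (((PadicInt.toZModPow n z).val : ℕ) : ℤ_[p]) := by
  haveI : NeZero (p ^ n) := ⟨pow_ne_zero n hp.out.ne_zero⟩
  have h0 : PadicInt.toZModPow n (z - (((PadicInt.toZModPow n z).val : ℕ) : ℤ_[p])) = 0 := by
    rw [map_sub, map_natCast, ZMod.natCast_zmod_val, sub_self]
  have hker : z - (((PadicInt.toZModPow n z).val : ℕ) : ℤ_[p]) ∈
      RingHom.ker (PadicInt.toZModPow (p := p) n) := h0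
  rw [PadicInt.ker_toZModPow, Ideal.mem_span_singleton] at hker
  exact hker

/-- A sum of `p^(M+1)`-st roots of unity whose exponents are pairwise distinct
modulo `p^M` is nonzero. -/
lemma sum_zeta_pow_ne_zero {M : ℕ} {ζ : ℂ} (hζ : IsPrimitiveRoot ζ (p ^ (M + 1)))
    {ι : Type*} [DecidableEq ι] {T : Finset ι} (hne : T.Nonempty) (f : ι → ℕ)
    (hinj : ∀ t ∈ T, ∀ t' ∈ T, ((f t : ZMod (p ^ M)) = (f t' : ZMod (p ^ M))) → t = t') :
    (∑ t ∈ T, ζ ^ f t) ≠ 0 := by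
  intro h0
  haveI : NeZero (p ^ M) := ⟨pow_ne_zero M hp.out.ne_zero⟩
  have hppos : 0 < p ^ (M + 1) := pow_pos hp.out.pos _
  have hdvd : Polynomial.cyclotomic (p ^ (M + 1)) ℤ ∣
      ∑ t ∈ T, (Polynomial.X : Polynomial ℤ) ^ f t := by
    rw [Polynomial.cyclotomic_eq_minpoly hζ hppos]
    refine minpoly.isIntegrallyClosed_dvd (hζ.isIntegral hppos) ?_
    simpa [map_sum] using h0
  obtain ⟨Q, hQ⟩ := hdvd
  set g : AddMonoidAlgebra ℤ (ZMod (p ^ M)) :=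
    AddMonoidAlgebra.single (1 : ZMod (p ^ M)) (1 : ℤ) with hgdef
  have hg : ∀ n : ℕ, g ^ n = AddMonoidAlgebra.single ((n : ZMod (p ^ M))) (1 : ℤ) := by
    intro n
    rw [hgdef, AddMonoidAlgebra.single_pow]
    congr 1
    · rw [nsmul_eq_mul, mul_one]
    · rw [one_pow]
  have happ := congrArg (Polynomial.aeval g) hQ
  rw [map_mul, map_sum] at happ
  simp only [map_pow, Polynomial.aeval_X] at happ
  have hcyc : Polynomial.aeval g (Polynomial.cyclotomic (p ^ (M + 1)) ℤ) =
      p • (1 : AddMonoidAlgebra ℤ (ZMod (p ^ M))) := by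
    rw [Polynomial.cyclotomic_prime_pow_eq_geom_sum hp.out, map_sum]
    have h1 : ∀ i ∈ Finset.range p,
        Polynomial.aeval g (((Polynomial.X : Polynomial ℤ) ^ p ^ M) ^ i) = 1 := by
      intro i _
      rw [map_pow, map_pow, Polynomial.aeval_X, hg (p ^ M), ZMod.natCast_self,
        ← AddMonoidAlgebra.one_def, one_pow]
    rw [Finset.sum_congr rfl h1, Finset.sum_const, Finset.card_range]
  rw [hcyc, smul_mul_assoc, one_mul] at happ
  obtain ⟨t₀, ht₀⟩ := hne
  set r : ZMod (p ^ M) := (f t₀ : ZMod (p ^ M)) with hr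
  have hLHS : (∑ t ∈ T, g ^ f t).coeff r = 1 := by
    rw [AddMonoidAlgebra.coeff_sum, Finset.sum_apply']
    have : ∀ t ∈ T, (g ^ f t).coeff r = if t = t₀ then (1 : ℤ) else 0 := by
      intro t ht
      rw [hg, AddMonoidAlgebra.coeff_single, Finsupp.single_apply]
      by_cases h : ((f t : ZMod (p ^ M))) = r
      · rw [if_pos h, if_pos (hinj t ht t₀ ht₀ (by rw [h, hr]))]
      · rw [if_neg h, if_neg (by rintro rfl; exact h hr.symm)]
    rw [Finset.sum_congr rfl this, Finset.sum_ite_eq' T t₀ (fun _ => (1 : ℤ)), if_pos ht₀]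
  have hRHS : ((p • Polynomial.aeval g Q : AddMonoidAlgebra ℤ (ZMod (p ^ M)))).coeff r =
      (p : ℤ) * (Polynomial.aeval g Q).coeff r := by
    rw [AddMonoidAlgebra.coeff_smul, Finsupp.smul_apply, nsmul_eq_mul]
  have h1 : (1 : ℤ) = (p : ℤ) * (Polynomial.aeval g Q).coeff r := by
    rw [← hLHS, happ, hRHS]
  have hdvd1 : (p : ℤ) ∣ 1 := ⟨_, h1⟩
  have hle := Int.le_of_dvd one_pos hdvd1
  have : (2 : ℤ) ≤ (p : ℤ) := by exact_mod_cast hp.out.two_le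
  omega

/-- The fractional part of `x` differs from `(x p^M mod p^M)/p^M` by an integer, whenever
`x p^M` is a `p`-adic integer. -/
lemma padicFract_sub_int_s6 (x : ℚ_[p]) (M : ℕ) (hx : ‖x * (p : ℚ_[p]) ^ M‖ ≤ 1) :
    ∃ k : ℤ, (padicFract p x : ℚ) =
      ((PadicInt.toZModPow M (⟨x * (p : ℚ_[p]) ^ M, hx⟩ : ℤ_[p])).val : ℚ) / (p : ℚ) ^ M
        + (k : ℚ) := by
  have hp1 : (1 : ℝ) < p := Nat.one_lt_cast.mpr hp.out.one_lt
  have hpQ : (p : ℚ) ≠ 0 := Nat.cast_ne_zero.mpr hp.out.ne_zero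
  have hpC : (p : ℚ_[p]) ≠ 0 := Nat.cast_ne_zero.mpr hp.out.ne_zero
  set m : ℕ := (-x.valuation).toNat with hm
  have hxm : ‖x * (p : ℚ_[p]) ^ m‖ ≤ 1 := by
    rcases eq_or_ne x 0 with h | h
    · simp [h]
    · rw [norm_mul, Padic.norm_eq_zpow_neg_valuation h, Padic.norm_p_pow,
        ← zpow_add₀ (by positivity : (p : ℝ) ≠ 0)]
      apply zpow_le_one_of_nonpos₀ (le_of_lt hp1)
      omega
  have hmM : m ≤ M := by
    rcases eq_or_ne x 0 with h | h
    · simp [hm, h]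
    · rw [norm_mul, Padic.norm_eq_zpow_neg_valuation h, Padic.norm_p_pow,
        ← zpow_add₀ (by positivity : (p : ℝ) ≠ 0)] at hx
      have hx' : (p : ℝ) ^ (-x.valuation + -(M : ℤ)) ≤ (p : ℝ) ^ (0 : ℤ) := by
        rw [zpow_zero]; exact hx
      have := (zpow_le_zpow_iff_right₀ hp1).mp hx'
      omega
  set zm : ℤ_[p] := (⟨x * (p : ℚ_[p]) ^ m, hxm⟩ : ℤ_[p]) with hzm
  set zM : ℤ_[p] := (⟨x * (p : ℚ_[p]) ^ M, hx⟩ : ℤ_[p]) with hzM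
  set a : ℕ := (PadicInt.toZModPow m zm).val with ha
  set c : ℕ := (PadicInt.toZModPow M zM).val with hc
  have hfr : padicFract p x = (a : ℚ) / (p : ℚ) ^ m := rfl
  have hrel : zM = zm * (p : ℤ_[p]) ^ (M - m) := by
    apply Subtype.ext
    show x * (p : ℚ_[p]) ^ M = _
    rw [PadicInt.coe_mul, PadicInt.coe_pow, PadicInt.coe_natCast]
    rw [hzm]
    show x * (p : ℚ_[p]) ^ M = x * (p : ℚ_[p]) ^ m * (p : ℚ_[p]) ^ (M - m)
    rw [mul_assoc, ← pow_add]
    congr 2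
    omega
  have hdm : ((p : ℤ_[p]) ^ m) ∣ zm - (a : ℤ_[p]) := toZModPow_val_dvd p zm m
  have hdM : ((p : ℤ_[p]) ^ M) ∣ zM - (c : ℤ_[p]) := toZModPow_val_dvd p zM M
  have hd2 : ((p : ℤ_[p]) ^ M) ∣ zM - (a : ℤ_[p]) * (p : ℤ_[p]) ^ (M - m) := by
    have := mul_dvd_mul hdm (dvd_refl ((p : ℤ_[p]) ^ (M - m)))
    rw [← pow_add] at this
    have hMm : m + (M - m) = M := by omega
    rw [hMm] at this
    calc ((p : ℤ_[p]) ^ M) ∣ (zm - (a : ℤ_[p])) * (p : ℤ_[p]) ^ (M - m) := this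
      _ = zM - (a : ℤ_[p]) * (p : ℤ_[p]) ^ (M - m) := by rw [hrel]; ring
  have hd3 : ((p : ℤ_[p]) ^ M) ∣ (c : ℤ_[p]) - (a : ℤ_[p]) * (p : ℤ_[p]) ^ (M - m) := by
    have := dvd_sub hd2 hdM
    simpa using this
  have hzdvd : ((p : ℤ) ^ M) ∣ ((c : ℤ) - (a : ℤ) * (p : ℤ) ^ (M - m)) := by
    rw [← PadicInt.norm_int_le_pow_iff_dvd]
    have hcast : (((c : ℤ) - (a : ℤ) * (p : ℤ) ^ (M - m) : ℤ) : ℤ_[p]) =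
        (c : ℤ_[p]) - (a : ℤ_[p]) * (p : ℤ_[p]) ^ (M - m) := by push_cast; ring
    rw [hcast, PadicInt.norm_le_pow_iff_mem_span_pow, Ideal.mem_span_singleton]
    exact hd3
  obtain ⟨d, hd⟩ := hzdvd
  refine ⟨-d, ?_⟩
  rw [hfr]
  have hsplit : (p : ℚ) ^ M = (p : ℚ) ^ m * (p : ℚ) ^ (M - m) := by
    rw [← pow_add]; congr 1; omega
  have hcast : (a : ℚ) * (p : ℚ) ^ (M - m) = (c : ℚ) - (p : ℚ) ^ M * (d : ℚ) := by
    have h := congrArg (fun z : ℤ => (z : ℚ)) hd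
    push_cast at h
    linarith
  have h1 : (a : ℚ) / (p : ℚ) ^ m = ((a : ℚ) * (p : ℚ) ^ (M - m)) / (p : ℚ) ^ M := by
    have hm0 : (p : ℚ) ^ m ≠ 0 := pow_ne_zero m hpQ
    have hM0 : (p : ℚ) ^ M ≠ 0 := pow_ne_zero M hpQ
    field_simp
    linear_combination (a : ℚ) * hsplit
  rw [h1, hcast, sub_div, mul_comm ((p:ℚ) ^ M) (d : ℚ), mul_div_assoc,
    div_self (pow_ne_zero M hpQ), mul_one]
  push_cast
  ring


/-- For a finite set `T ⊆ ℤ_p` with at least two elements, the exponential sum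
`μ̂_T(ξ) = ∑_{t ∈ T} e^{-2πi {t ξ}}` is nonzero for every `ξ` with `|ξ|_p > p^{γ_T + 1}`. -/
theorem exp_sum_nonzero_of_high_frequency (T : Finset ℤ_[p]) (hT : 1 < T.card) (ξ : ℚ_[p])
    (hξ : (p : ℝ) ^ (gammaT p T hT + 1) < ‖ξ‖) :
    (∑ t ∈ T, Complex.exp (-(2 * Real.pi * Complex.I
        * (padicFract p ((t : ℚ_[p]) * ξ) : ℂ)))) ≠ 0 := by
  classical
  have hp1 : (1 : ℝ) < p := Nat.one_lt_cast.mpr hp.out.one_lt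
  have hpR : (0 : ℝ) < p := lt_trans one_pos hp1
  set γ := gammaT p T hT with hγdef
  have hγle : ∀ {a b : ℤ_[p]}, a ∈ T → b ∈ T → a ≠ b → (a - b).valuation ≤ γ := by
    intro a b ha hb hab
    rw [hγdef]
    unfold gammaT
    have hmem : (a, b) ∈ T.offDiag := Finset.mem_offDiag.mpr ⟨ha, hb, hab⟩
    exact Finset.le_sup' (fun tt : ℤ_[p] × ℤ_[p] => ((tt.1 - tt.2).valuation : ℤ)) hmem
  have hoff : T.offDiag.Nonempty := Finset.card_pos.mp (by
    rw [Finset.offDiag_card]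
    have h2 : 2 * T.card ≤ T.card * T.card := Nat.mul_le_mul_right _ hT
    omega)
  have hγ0 : 0 ≤ γ := by
    obtain ⟨tt, htt⟩ := hoff
    have h1 := Finset.mem_offDiag.mp htt
    exact le_trans (Int.natCast_nonneg _) (hγle h1.1 h1.2.1 h1.2.2)
  have hξ0 : ξ ≠ 0 := by
    rintro rfl
    rw [norm_zero] at hξ
    have := zpow_pos hpR (γ + 1)
    linarith
  have hval : γ + 1 < -ξ.valuation := by
    rw [Padic.norm_eq_zpow_neg_valuation hξ0] at hξ
    have := (zpow_lt_zpow_iff_right₀ hp1).mp hξ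
    omega
  set M : ℕ := (-ξ.valuation).toNat with hMdef
  have hM : (M : ℤ) = -ξ.valuation := Int.toNat_of_nonneg (by omega)
  have hMγ : γ + 2 ≤ (M : ℤ) := by omega
  obtain ⟨M₁, hM₁⟩ : ∃ M₁, M = M₁ + 1 := ⟨M - 1, by omega⟩
  have hγM₁ : γ + 1 ≤ (M₁ : ℤ) := by
    have : (M : ℤ) = (M₁ : ℤ) + 1 := by exact_mod_cast congrArg (Nat.cast : ℕ → ℤ) hM₁
    omega
  have hnormξ : ‖ξ‖ = (p : ℝ) ^ (M : ℤ) := by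
    rw [Padic.norm_eq_zpow_neg_valuation hξ0, hM]
  have hb : ∀ t : ℤ_[p], ‖(t : ℚ_[p]) * ξ * (p : ℚ_[p]) ^ M‖ ≤ 1 := by
    intro t
    rw [norm_mul, norm_mul, hnormξ, Padic.norm_p_pow]
    calc ‖(t : ℚ_[p])‖ * (p : ℝ) ^ (M : ℤ) * (p : ℝ) ^ (-(M : ℤ))
        = ‖(t : ℚ_[p])‖ := by
          rw [mul_assoc, ← zpow_add₀ (ne_of_gt hpR)]
          simp
      _ ≤ 1 := t.2
  set F : ℤ_[p] → ℕ := fun t =>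
    (PadicInt.toZModPow M (⟨(t : ℚ_[p]) * ξ * (p : ℚ_[p]) ^ M, hb t⟩ : ℤ_[p])).val with hF
  set ζ : ℂ := Complex.exp (-(2 * Real.pi * Complex.I / ((p : ℂ) ^ M))) with hζdef
  have hppow0 : (p : ℕ) ^ M ≠ 0 := pow_ne_zero _ hp.out.ne_zero
  have hζprim : IsPrimitiveRoot ζ (p ^ M) := by
    have h := Complex.isPrimitiveRoot_exp (p ^ M) hppow0
    have he : ζ = (Complex.exp (2 * Real.pi * Complex.I / (((p : ℕ) ^ M : ℕ) : ℂ)))⁻¹ := by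
      rw [← Complex.exp_neg]
      push_cast
      ring
    rw [he]
    exact h.inv
  have hterm : ∀ t ∈ T, Complex.exp (-(2 * Real.pi * Complex.I *
      (padicFract p ((t : ℚ_[p]) * ξ) : ℂ))) = ζ ^ F t := by
    intro t _
    obtain ⟨k, hk⟩ := padicFract_sub_int_s6 p ((t : ℚ_[p]) * ξ) M (hb t)
    have hkC : ((padicFract p ((t : ℚ_[p]) * ξ) : ℚ) : ℂ)
        = (F t : ℂ) / ((p : ℂ) ^ M) + (k : ℂ) := by
      rw [hk]
      push_cast
      ring
    rw [hkC]
    have harg : -(2 * Real.pi * Complex.I * ((F t : ℂ) / ((p : ℂ) ^ M) + (k : ℂ)))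
        = (F t : ℂ) * (-(2 * Real.pi * Complex.I / ((p : ℂ) ^ M)))
          + ((-k : ℤ) : ℂ) * (2 * Real.pi * Complex.I) := by
      push_cast
      ring
    rw [harg, Complex.exp_add, Complex.exp_int_mul_two_pi_mul_I, mul_one,
      Complex.exp_nat_mul, hζdef]
  rw [Finset.sum_congr rfl hterm]
  have hζprim' : IsPrimitiveRoot ζ (p ^ (M₁ + 1)) := hM₁ ▸ hζprim
  refine sum_zeta_pow_ne_zero p hζprim' (Finset.card_pos.mp (by omega)) F ?_
  intro t ht t' ht' hcong
  by_contra hne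
  have hd1 : ((p : ℤ) ^ M₁) ∣ ((F t' : ℤ) - (F t : ℤ)) := by
    have h1 := (ZMod.natCast_eq_natCast_iff _ _ _).mp hcong
    have h2 := h1.dvd
    push_cast at h2 ⊢
    exact h2
  set zt : ℤ_[p] := (⟨(t : ℚ_[p]) * ξ * (p : ℚ_[p]) ^ M, hb t⟩ : ℤ_[p]) with hzt
  set zt' : ℤ_[p] := (⟨(t' : ℚ_[p]) * ξ * (p : ℚ_[p]) ^ M, hb t'⟩ : ℤ_[p]) with hzt'
  have h1 : ((p : ℤ_[p]) ^ M) ∣ zt - (F t : ℤ_[p]) := toZModPow_val_dvd p zt M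
  have h2 : ((p : ℤ_[p]) ^ M) ∣ zt' - (F t' : ℤ_[p]) := toZModPow_val_dvd p zt' M
  have hq : ((p : ℤ_[p]) ^ M₁) ∣ ((p : ℤ_[p]) ^ M) := pow_dvd_pow _ (by omega)
  have hcast : ((p : ℤ_[p]) ^ M₁) ∣ ((F t' : ℤ_[p]) - (F t : ℤ_[p])) := by
    obtain ⟨e, he⟩ := hd1
    have h3 := congrArg (fun z : ℤ => ((z : ℤ_[p]) : ℤ_[p])) he
    push_cast at h3
    exact ⟨(e : ℤ_[p]), h3⟩
  have h3 : ((p : ℤ_[p]) ^ M₁) ∣ zt' - zt := by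
    have hsplit : zt' - zt = (zt' - (F t' : ℤ_[p])) - (zt - (F t : ℤ_[p]))
        + ((F t' : ℤ_[p]) - (F t : ℤ_[p])) := by ring
    rw [hsplit]
    exact dvd_add (dvd_sub (dvd_trans hq h2) (dvd_trans hq h1)) hcast
  have hnorm_le : ‖zt' - zt‖ ≤ (p : ℝ) ^ (-(M₁ : ℤ)) := by
    rw [PadicInt.norm_le_pow_iff_mem_span_pow, Ideal.mem_span_singleton]
    exact h3
  have hsub0 : t' - t ≠ 0 := sub_ne_zero.mpr (Ne.symm hne)
  have hvle : (t' - t).valuation ≤ γ := hγle ht' ht (Ne.symm hne)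
  have hcoe : ((zt' - zt : ℤ_[p]) : ℚ_[p]) = ((t' - t : ℤ_[p]) : ℚ_[p]) * ξ * (p : ℚ_[p]) ^ M := by
    rw [PadicInt.coe_sub, PadicInt.coe_sub, hzt, hzt']
    show (t' : ℚ_[p]) * ξ * (p : ℚ_[p]) ^ M - (t : ℚ_[p]) * ξ * (p : ℚ_[p]) ^ M = _
    ring
  have hnorm_eq : ‖zt' - zt‖ = (p : ℝ) ^ (-((t' - t).valuation : ℤ)) := by
    rw [PadicInt.norm_def, hcoe, norm_mul, norm_mul, hnormξ, Padic.norm_p_pow,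
      ← PadicInt.norm_def, PadicInt.norm_eq_zpow_neg_valuation hsub0, mul_assoc,
      ← zpow_add₀ (ne_of_gt hpR)]
    simp
  rw [hnorm_eq] at hnorm_le
  have hfin := (zpow_le_zpow_iff_right₀ hp1).mp hnorm_le
  omega

end PadicTiling
end
end
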